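/- Let I, J ⊆ ℝ be open intervals, D = I × J, and let H, λ : D → ℝ be smooth such that H is nowhere zero and λ(u,v) ∉ {0, 1} for all (u,v) ∈ D. Suppose that ∂_v(H(1 − λ)) = 0 and ∂_u(H(1 − λ^{−1})) = 0 on D. Then there exist smooth functions f : I → ℝ and g : J → ℝ with f nowhere zero and f(u) + g(v) nowhere zero on D, such that H(u,v) = 1/(f(u) + g(v)) and λ(u,v) = −g(v)/f(u) for all (u,v) ∈ D. -/

import Mathlib

noncomputable section

/-- Partial derivative in the first variable. -/
def pd1 (f : ℝ → ℝ → ℝ) (u v : ℝ) : ℝ := deriv (fun x => f x v) u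

/-- Partial derivative in the second variable. -/
def pd2 (f : ℝ → ℝ → ℝ) (u v : ℝ) : ℝ := deriv (fun y => f u y) v

/-- Smoothness of a two-variable function on a set. -/
def Smooth2 (f : ℝ → ℝ → ℝ) (s : Set (ℝ × ℝ)) : Prop :=
  ContDiffOn ℝ (⊤ : ℕ∞) (fun p : ℝ × ℝ => f p.1 p.2) s

/-- equations (3.6)–(3.7): the compatibility conditions
`∂_v(H(1 − λ)) = 0` and `∂_u(H(1 − λ⁻¹)) = 0` for the variable spectral parameter force
`H = 1/(f(u) + g(v))` and `λ = −g(v)/f(u)`. -/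
lemma const_aux {φ : ℝ → ℝ} {s : Set ℝ} (hs : IsOpen s) (hc : Convex ℝ s)
    (hd : ∀ x ∈ s, DifferentiableAt ℝ φ x) (h0 : ∀ x ∈ s, deriv φ x = 0)
    {x y : ℝ} (hx : x ∈ s) (hy : y ∈ s) : φ x = φ y := by
  apply hc.is_const_of_fderivWithin_eq_zero (fun z hz => (hd z hz).differentiableWithinAt)
    (fun z hz => ?_) hx hy
  rw [fderivWithin_of_isOpen hs hz]
  apply ContinuousLinearMap.ext_ring
  rw [ContinuousLinearMap.zero_apply, fderiv_apply_one_eq_deriv]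
  exact h0 z hz

theorem statement16
    (I J : Set ℝ)
    (hIopen : IsOpen I) (hIint : I.OrdConnected)
    (hJopen : IsOpen J) (hJint : J.OrdConnected)
    (H lam : ℝ → ℝ → ℝ)
    (hH : Smooth2 H (I ×ˢ J)) (hlam : Smooth2 lam (I ×ˢ J))
    (hH0 : ∀ u ∈ I, ∀ v ∈ J, H u v ≠ 0)
    (hlam0 : ∀ u ∈ I, ∀ v ∈ J, lam u v ≠ 0)
    (hlam1 : ∀ u ∈ I, ∀ v ∈ J, lam u v ≠ 1)
    (hcomp1 : ∀ u ∈ I, ∀ v ∈ J,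
      pd2 (fun u v => H u v * (1 - lam u v)) u v = 0)
    (hcomp2 : ∀ u ∈ I, ∀ v ∈ J,
      pd1 (fun u v => H u v * (1 - (lam u v)⁻¹)) u v = 0) :
    ∃ f g : ℝ → ℝ, ContDiffOn ℝ (⊤ : ℕ∞) f I ∧ ContDiffOn ℝ (⊤ : ℕ∞) g J ∧
      (∀ u ∈ I, f u ≠ 0) ∧
      (∀ u ∈ I, ∀ v ∈ J,
        f u + g v ≠ 0 ∧ H u v = 1 / (f u + g v) ∧ lam u v = -(g v) / f u) := by
  by_cases hne : I.Nonempty ∧ J.Nonempty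
  swap
  · refine ⟨fun _ => 1, fun _ => 0, contDiffOn_const, contDiffOn_const,
      fun _ _ => one_ne_zero, fun u hu v hv => absurd ⟨⟨u, hu⟩, ⟨v, hv⟩⟩ hne⟩
  obtain ⟨⟨u₀, hu₀⟩, ⟨v₀, hv₀⟩⟩ := hne
  have hprod : IsOpen (I ×ˢ J) := hIopen.prod hJopen
  have hJc : Convex ℝ J := convex_iff_ordConnected.mpr hJint
  have hIc : Convex ℝ I := convex_iff_ordConnected.mpr hIint
  -- A and B and their properties
  have hA2 : ContDiffOn ℝ (⊤ : ℕ∞)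
      (fun p : ℝ × ℝ => H p.1 p.2 * (1 - lam p.1 p.2)) (I ×ˢ J) :=
    hH.mul (contDiffOn_const.sub hlam)
  have hB2 : ContDiffOn ℝ (⊤ : ℕ∞)
      (fun p : ℝ × ℝ => H p.1 p.2 * (1 - (lam p.1 p.2)⁻¹)) (I ×ˢ J) := by
    refine hH.mul (contDiffOn_const.sub (hlam.inv ?_))
    exact fun p hp => hlam0 p.1 hp.1 p.2 hp.2
  have hA0 : ∀ u ∈ I, ∀ v ∈ J, H u v * (1 - lam u v) ≠ 0 := fun u hu v hv =>
    mul_ne_zero (hH0 u hu v hv) (sub_ne_zero.mpr (Ne.symm (hlam1 u hu v hv)))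
  have hB0 : ∀ u ∈ I, ∀ v ∈ J, H u v * (1 - (lam u v)⁻¹) ≠ 0 := fun u hu v hv =>
    mul_ne_zero (hH0 u hu v hv)
      (sub_ne_zero.mpr fun h => hlam1 u hu v hv (inv_eq_one.mp h.symm))
  -- constancy claims
  have constA : ∀ u ∈ I, ∀ v ∈ J,
      H u v * (1 - lam u v) = H u v₀ * (1 - lam u v₀) := by
    intro u hu v hv
    refine const_aux hJopen hJc (fun y hy => ?_) (fun y hy => hcomp1 u hu y hy) hv hv₀
    have hc : ContDiffAt ℝ (⊤ : ℕ∞) (fun p : ℝ × ℝ => H p.1 p.2 * (1 - lam p.1 p.2)) (u, y) :=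
      hA2.contDiffAt (hprod.mem_nhds ⟨hu, hy⟩)
    exact (hc.comp y (ContDiffAt.prodMk contDiffAt_const contDiffAt_id)).differentiableAt (by simp)
  have constB : ∀ u ∈ I, ∀ v ∈ J,
      H u v * (1 - (lam u v)⁻¹) = H u₀ v * (1 - (lam u₀ v)⁻¹) := by
    intro u hu v hv
    refine const_aux hIopen hIc (fun x hx => ?_) (fun x hx => hcomp2 x hx v hv) hu hu₀
    have hc : ContDiffAt ℝ (⊤ : ℕ∞)
        (fun p : ℝ × ℝ => H p.1 p.2 * (1 - (lam p.1 p.2)⁻¹)) (x, v) :=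
      hB2.contDiffAt (hprod.mem_nhds ⟨hx, hv⟩)
    exact (hc.comp x (ContDiffAt.prodMk contDiffAt_id contDiffAt_const)).differentiableAt (by simp)
  refine ⟨fun u => (H u v₀ * (1 - lam u v₀))⁻¹, fun v => (H u₀ v * (1 - (lam u₀ v)⁻¹))⁻¹,
    ?_, ?_, ?_, ?_⟩
  · refine ContDiffOn.inv ?_ (fun u hu => hA0 u hu v₀ hv₀)
    exact hA2.comp (ContDiffOn.prodMk contDiffOn_id contDiffOn_const) (fun u hu => show (u, v₀) ∈ I ×ˢ J from ⟨hu, hv₀⟩)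
  · refine ContDiffOn.inv ?_ (fun v hv => hB0 u₀ hu₀ v hv)
    exact hB2.comp (ContDiffOn.prodMk contDiffOn_const contDiffOn_id) (fun v hv => show (u₀, v) ∈ I ×ˢ J from ⟨hu₀, hv⟩)
  · exact fun u hu => inv_ne_zero (hA0 u hu v₀ hv₀)
  · intro u hu v hv
    have h0 := hH0 u hu v hv
    have l0 := hlam0 u hu v hv
    have l1 : lam u v - 1 ≠ 0 := sub_ne_zero.mpr (hlam1 u hu v hv)
    have ha0 := hA0 u hu v hv
    have hb0 := hB0 u hu v hv
    have e1 : (H u v₀ * (1 - lam u v₀))⁻¹ = (H u v * (1 - lam u v))⁻¹ := by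
      rw [constA u hu v hv]
    have e2 : (H u₀ v * (1 - (lam u₀ v)⁻¹))⁻¹ = (H u v * (1 - (lam u v)⁻¹))⁻¹ := by
      rw [constB u hu v hv]
    have key : (H u v * (1 - lam u v))⁻¹ + (H u v * (1 - (lam u v)⁻¹))⁻¹ = (H u v)⁻¹ := by
      field_simp [sub_ne_zero.mpr (Ne.symm (hlam1 u hu v hv))]
      ring
    refine ⟨?_, ?_, ?_⟩ <;> beta_reduce
    · rw [e1, e2, key]; exact inv_ne_zero h0
    · rw [e1, e2, key, one_div, inv_inv]
    · rw [e1, e2]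
      field_simp
      ring
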